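/- Suppose a family of operators U_h(t,s) on a normed space H satisfies ‖U_h(t,s) A_h(s)‖ ≤ C(t−s)^{-1} for 0 ≤ s < t ≤ T, and ρ : [τ,T] → H is C¹ with ‖ρ(s)‖ ≤ M h^r (s−τ)^{-α} and ‖ρ'(s)‖ ≤ M h^r (s−τ)^{-1-α} for s ∈ (τ,T], where 0 ≤ α < 1. Then for τ < t ≤ T: ‖U_h(t,(t+τ)/2) ρ((t+τ)/2)‖ + ∫_τ^{(t+τ)/2} ‖U_h(t,s)A_h(s)‖·‖ρ(s)‖ ds + ∫_{(t+τ)/2}^t ‖ρ'(s)‖ ds ≤ C' M h^r (t−τ)^{-α}, with C' depending only on C and α. -/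

import Mathlib

set_option maxHeartbeats 1000000


open Set

theorem abstract_theta_estimate
    {H : Type*} [NormedAddCommGroup H] [NormedSpace ℝ H]
    (C α : ℝ) (hC : 0 < C) (hα0 : 0 ≤ α) (hα1 : α < 1) :
    ∃ C' > (0 : ℝ), ∀ (T τ M h r : ℝ)
      (U : ℝ → ℝ → H →L[ℝ] H) (A : ℝ → H →L[ℝ] H) (ρ ρ' : ℝ → H),
      0 ≤ τ → τ < T → 0 ≤ M → 0 < h →
      (∀ s t : ℝ, 0 ≤ s → s < t → t ≤ T → ‖(U t s).comp (A s)‖ ≤ C * (t - s)⁻¹) →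
      (∀ s t : ℝ, ‖U t s‖ ≤ C) →
      (∀ s ∈ Ioc τ T, HasDerivAt ρ (ρ' s) s) →
      (∀ s ∈ Ioc τ T, ‖ρ s‖ ≤ M * h ^ r * (s - τ) ^ (-α)) →
      (∀ s ∈ Ioc τ T, ‖ρ' s‖ ≤ M * h ^ r * (s - τ) ^ (-1 - α)) →
      ∀ t : ℝ, τ < t → t ≤ T →
        ‖U t ((t + τ) / 2) (ρ ((t + τ) / 2))‖ +
          (∫ s in τ..(t + τ) / 2, ‖(U t s).comp (A s)‖ * ‖ρ s‖) +
          (∫ s in ((t + τ) / 2)..t, ‖ρ' s‖) ≤ C' * M * h ^ r * (t - τ) ^ (-α) := by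
  have h1α : 0 < 1 - α := by linarith
  refine ⟨2 * (C + C / (1 - α) + 1), by positivity, ?_⟩
  intro T τ M h r U A ρ ρ' hτ0 hτT hM hh hUA hU hderiv hρ hρ' t hτt htT
  set m : ℝ := (t + τ) / 2 with hm
  set d : ℝ := t - τ with hd
  have hd0 : 0 < d := by simp [hd]; linarith
  have hmτ : m - τ = d / 2 := by simp [hm, hd]; ring
  have htm : t - m = d / 2 := by simp [hm, hd]; ring
  have hτm : τ < m := by simp [hm]; linarith
  have hmt : m < t := by simp [hm]; linarith
  set P : ℝ := M * h ^ r with hP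
  have hP0 : 0 ≤ P := by positivity
  -- E = (d/2)^(-α)
  set E : ℝ := (d / 2) ^ (-α) with hE
  have hE0 : 0 < E := Real.rpow_pos_of_pos (by linarith) _
  have hEle : E ≤ 2 * d ^ (-α) := by
    have h2 : (d / 2 : ℝ) ^ (-α) = d ^ (-α) / 2 ^ (-α) :=
      Real.div_rpow (le_of_lt hd0) (by norm_num) _
    have h3 : (2 : ℝ) ^ (-α) = (2 ^ α)⁻¹ := Real.rpow_neg (by norm_num) _
    have h4 : (2 : ℝ) ^ α ≤ 2 := by
      calc (2 : ℝ) ^ α ≤ 2 ^ (1 : ℝ) :=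
            Real.rpow_le_rpow_of_exponent_le (by norm_num) (by linarith)
        _ = 2 := Real.rpow_one 2
      
    have h5 : (0 : ℝ) < 2 ^ α := Real.rpow_pos_of_pos (by norm_num) _
    have hdα : (0 : ℝ) < d ^ (-α) := Real.rpow_pos_of_pos hd0 _
    rw [hE, h2, h3, div_eq_mul_inv, inv_inv]
    nlinarith
  -- Term 1
  have hT1 : ‖U t m (ρ m)‖ ≤ C * (P * E) := by
    have hmIoc : m ∈ Ioc τ T := ⟨hτm, by linarith⟩
    calc ‖U t m (ρ m)‖ ≤ ‖U t m‖ * ‖ρ m‖ := (U t m).le_opNorm _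
      _ ≤ C * (P * E) := by
          have h1 := hρ m hmIoc
          rw [hmτ] at h1
          exact mul_le_mul (hU m t) h1 (norm_nonneg _) hC.le
  -- Term 2
  have hT2 : (∫ s in τ..m, ‖(U t s).comp (A s)‖ * ‖ρ s‖) ≤ C / (1 - α) * (P * E) := by
    set K : ℝ := C * (2 / d) * P with hK
    have hK0 : 0 ≤ K := by positivity
    have hdom : ∀ s ∈ Ioc τ m, ‖(U t s).comp (A s)‖ * ‖ρ s‖ ≤ K * (s - τ) ^ (-α) := by
      intro s hs
      obtain ⟨hs1, hs2⟩ := hs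
      have hop : ‖(U t s).comp (A s)‖ ≤ C * (2 / d) := by
        have h1 : ‖(U t s).comp (A s)‖ ≤ C * (t - s)⁻¹ :=
          hUA s t (by linarith) (by linarith) htT
        have h2 : (t - s)⁻¹ ≤ (d / 2)⁻¹ := by
          apply inv_anti₀ (by linarith)
          linarith
        have : (d / 2 : ℝ)⁻¹ = 2 / d := by field_simp
        calc ‖(U t s).comp (A s)‖ ≤ C * (t - s)⁻¹ := h1
          _ ≤ C * (2 / d) := by rw [← this]; exact mul_le_mul_of_nonneg_left h2 hC.le
      have hρs : ‖ρ s‖ ≤ P * (s - τ) ^ (-α) := hρ s ⟨hs1, by linarith⟩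
      calc ‖(U t s).comp (A s)‖ * ‖ρ s‖ ≤ (C * (2 / d)) * (P * (s - τ) ^ (-α)) :=
            mul_le_mul hop hρs (norm_nonneg _) (by positivity)
        _ = K * (s - τ) ^ (-α) := by ring
    have hint : IntervalIntegrable (fun s => K * (s - τ) ^ (-α)) MeasureTheory.volume τ m := by
      apply IntervalIntegrable.const_mul
      have := (intervalIntegral.intervalIntegrable_rpow' (a := 0) (b := m - τ)
        (r := -α) (by linarith)).comp_sub_right τ
      simpa using this
    have hval : (∫ s in τ..m, K * (s - τ) ^ (-α)) = K * ((d / 2) ^ (1 - α) / (1 - α)) := by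
      rw [intervalIntegral.integral_const_mul]
      congr 1
      have h1 := intervalIntegral.integral_comp_sub_right (a := τ) (b := m) (fun u => u ^ (-α)) τ
      simp only [sub_self] at h1
      rw [h1, hmτ, integral_rpow (Or.inl (by linarith : (-1:ℝ) < -α))]
      rw [Real.zero_rpow (by linarith)]
      have : -α + 1 = 1 - α := by ring
      rw [this]
      ring
    have hmono : (∫ s in τ..m, ‖(U t s).comp (A s)‖ * ‖ρ s‖)
        ≤ ∫ s in τ..m, K * (s - τ) ^ (-α) := by
      rw [intervalIntegral.integral_of_le hτm.le, intervalIntegral.integral_of_le hτm.le]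
      apply MeasureTheory.integral_mono_of_nonneg
      · exact Filter.Eventually.of_forall fun s => by positivity
      · exact (intervalIntegrable_iff_integrableOn_Ioc_of_le hτm.le).mp hint
      · exact (MeasureTheory.ae_restrict_iff' measurableSet_Ioc).2
          (Filter.Eventually.of_forall hdom)
    have hfin : K * ((d / 2) ^ (1 - α) / (1 - α)) = C / (1 - α) * (P * E) := by
      have : (d / 2 : ℝ) ^ (1 - α) = (d / 2) * E := by
        rw [hE, show (1 - α) = 1 + (-α) by ring, Real.rpow_add (by linarith), Real.rpow_one]
      rw [hK, this]
      field_simp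
    calc (∫ s in τ..m, ‖(U t s).comp (A s)‖ * ‖ρ s‖)
        ≤ ∫ s in τ..m, K * (s - τ) ^ (-α) := hmono
      _ = C / (1 - α) * (P * E) := by rw [hval, hfin]
  -- Term 3
  have hT3 : (∫ s in m..t, ‖ρ' s‖) ≤ P * E := by
    set c : ℝ := P * (d / 2) ^ (-1 - α) with hc
    have hc0 : 0 ≤ c := by positivity
    have hdom : ∀ s ∈ Ioc m t, ‖ρ' s‖ ≤ c := by
      intro s hs
      obtain ⟨hs1, hs2⟩ := hs
      have h1 : ‖ρ' s‖ ≤ P * (s - τ) ^ (-1 - α) := hρ' s ⟨by linarith, by linarith⟩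
      have h2 : (s - τ) ^ (-1 - α) ≤ (d / 2) ^ (-1 - α) := by
        apply Real.rpow_le_rpow_of_nonpos (by linarith) (by linarith) (by linarith)
      calc ‖ρ' s‖ ≤ P * (s - τ) ^ (-1 - α) := h1
        _ ≤ c := mul_le_mul_of_nonneg_left h2 hP0
    have hmono : (∫ s in m..t, ‖ρ' s‖) ≤ ∫ s in m..t, c := by
      rw [intervalIntegral.integral_of_le hmt.le, intervalIntegral.integral_of_le hmt.le]
      apply MeasureTheory.integral_mono_of_nonneg
      · exact Filter.Eventually.of_forall fun s => norm_nonneg _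
      · exact MeasureTheory.integrableOn_const (by simp [Real.volume_Ioc])
      · exact (MeasureTheory.ae_restrict_iff' measurableSet_Ioc).2
          (Filter.Eventually.of_forall hdom)
    have hval : (∫ s in m..t, c) = (d / 2) * c := by
      rw [intervalIntegral.integral_const, htm, smul_eq_mul]
    have hfin : (d / 2) * c = P * E := by
      have : (d / 2 : ℝ) ^ (-1 - α) = (d / 2)⁻¹ * E := by
        rw [hE, show (-1 - α : ℝ) = (-1) + (-α) by ring, Real.rpow_add (by linarith),
          Real.rpow_neg_one]
      rw [hc, this]
      field_simp
    calc (∫ s in m..t, ‖ρ' s‖) ≤ ∫ s in m..t, c := hmono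
      _ = P * E := by rw [hval, hfin]
  -- combine
  have hsum : ‖U t m (ρ m)‖ + (∫ s in τ..m, ‖(U t s).comp (A s)‖ * ‖ρ s‖)
      + (∫ s in m..t, ‖ρ' s‖) ≤ (C + C / (1 - α) + 1) * (P * E) := by
    have := add_le_add (add_le_add hT1 hT2) hT3
    linarith
  have hfinal : (C + C / (1 - α) + 1) * (P * E) ≤ 2 * (C + C / (1 - α) + 1) * M * h ^ r * d ^ (-α) := by
    have hcoef : 0 ≤ C + C / (1 - α) + 1 := by positivity
    have : (C + C / (1 - α) + 1) * (P * E) ≤ (C + C / (1 - α) + 1) * (P * (2 * d ^ (-α))) := by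
      apply mul_le_mul_of_nonneg_left _ hcoef
      exact mul_le_mul_of_nonneg_left hEle hP0
    calc (C + C / (1 - α) + 1) * (P * E)
        ≤ (C + C / (1 - α) + 1) * (P * (2 * d ^ (-α))) := this
      _ = 2 * (C + C / (1 - α) + 1) * M * h ^ r * d ^ (-α) := by rw [hP]; ring
  calc ‖U t m (ρ m)‖ + (∫ s in τ..m, ‖(U t s).comp (A s)‖ * ‖ρ s‖)
      + (∫ s in m..t, ‖ρ' s‖) ≤ (C + C / (1 - α) + 1) * (P * E) := hsum
    _ ≤ 2 * (C + C / (1 - α) + 1) * M * h ^ r * d ^ (-α) := hfinal
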